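/- If R is almost Gorenstein and I is a reflexive m-primary ideal (I = I**), then ω ⊆ Λ (in particular Λ is reflexive and I^n is reflexive for all n ≥ ν). -/

import Mathlib

open Submodule IsLocalRing

noncomputable section

/-- Length of an `R`-module, defined as the Krull dimension of its submodule lattice. -/
def modLength (R : Type*) [Ring R] (M : Type*) [AddCommGroup M] [Module R M] : WithBot ℕ∞ :=
  Order.krullDim (Submodule R M)

/-- Length of the quotient `I / J` for submodules `J ≤ I` of an ambient module. -/
def qlen (R : Type*) [CommRing R] {K : Type*} [AddCommGroup K] [Module R K]
    (I J : Submodule R K) : WithBot ℕ∞ :=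
  modLength R (I ⧸ (J.comap I.subtype))

/-- The image of an ideal of `R` in `K`, viewed as an `R`-submodule of `K`. -/
def idl (R : Type*) [CommRing R] (K : Type*) [CommRing K] [Algebra R K] (I : Ideal R) :
    Submodule R K :=
  Submodule.map (Algebra.linearMap R K) I

/-- The blowing-up `Λ(I) = ⋃ₙ (Iⁿ : Iⁿ)` of `R` along `I`, inside `K`. -/
def blowup (R : Type*) [CommRing R] (K : Type*) [CommRing K] [Algebra R K] (I : Ideal R) :
    Submodule R K :=
  ⨆ n : ℕ, (idl R K I ^ n) / (idl R K I ^ n)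

/-- The set of values of the nonzero elements of a fractional ideal. -/
def vvals {R : Type*} [CommRing R] {K : Type*} [CommRing K] [Algebra R K]
    (v : K → WithTop ℤ) (J : Submodule R K) : Set (WithTop ℤ) :=
  v '' {y | y ∈ J ∧ y ≠ 0}

section Aux

variable {R : Type*} [CommRing R] {K : Type*} [Field K] [Algebra R K]

lemma aux_omega_div_eq (ω M : Submodule R K) (h1 : (1 : Submodule R K) ≤ ω)
    (hωω : ω / ω = 1) (hM : ω * M = M) : ω / M = 1 / M := by
  ext z
  simp only [Submodule.mem_div_iff_forall_mul_mem]
  constructor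
  · intro h y hy
    rw [← hωω, Submodule.mem_div_iff_forall_mul_mem]
    intro w hw
    have hwy : w * y ∈ M := by rw [← hM]; exact Submodule.mul_mem_mul hw hy
    have h2 := h _ hwy
    have heq : z * (w * y) = z * y * w := by ring
    rwa [heq] at h2
  · intro h y hy
    exact h1 (h y hy)

lemma aux_omega_mul_div (ω M : Submodule R K) (h1 : (1 : Submodule R K) ≤ ω)
    (hM : ω * M = M) : ω * ((1 : Submodule R K) / M) = (1 : Submodule R K) / M := by
  apply le_antisymm
  · refine Submodule.mul_le.mpr fun w hw z hz => ?_
    rw [Submodule.mem_div_iff_forall_mul_mem]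
    intro y hy
    have hwy : w * y ∈ M := by rw [← hM]; exact Submodule.mul_mem_mul hw hy
    have h2 := Submodule.mem_div_iff_forall_mul_mem.mp hz _ hwy
    have heq : z * (w * y) = w * z * y := by ring
    rwa [heq] at h2
  · conv_lhs => rw [← one_mul ((1 : Submodule R K) / M)]
    exact mul_le_mul' h1 le_rfl

lemma aux_refl (ω J : Submodule R K) (h1 : (1 : Submodule R K) ≤ ω) (hωω : ω / ω = 1)
    (hd : ω / (ω / J) = J) (hJ : ω * J = J) : J = 1 / (1 / J) := by
  conv_lhs => rw [← hd]
  rw [aux_omega_div_eq ω J h1 hωω hJ,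
    aux_omega_div_eq ω (1 / J) h1 hωω (aux_omega_mul_div ω J h1 hJ)]

lemma aux_fg_of_le [IsNoetherianRing R] {M N : Submodule R K} (hM : M.FG) (h : N ≤ M) :
    N.FG :=
  isNoetherian_submodule.mp (isNoetherian_of_fg_of_noetherian M hM) N h

lemma aux_one_fg : (1 : Submodule R K).FG :=
  ⟨{1}, by rw [Finset.coe_singleton, ← Submodule.one_eq_span]⟩

lemma aux_div_fg [IsNoetherianRing R] {J : Submodule R K} {z : K} (hz : z ∈ J) (h0 : z ≠ 0) :
    ((1 : Submodule R K) / J).FG := by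
  have hle : Submodule.span R {z} * ((1 : Submodule R K) / J) ≤ 1 := by
    refine Submodule.mul_le.mpr fun a ha w hw => ?_
    rw [Submodule.mem_span_singleton] at ha
    obtain ⟨r, rfl⟩ := ha
    rw [smul_mul_assoc]
    refine Submodule.smul_mem _ r ?_
    rw [mul_comm]
    exact Submodule.mem_div_iff_forall_mul_mem.mp hw z hz
  have key : (1 : Submodule R K) / J =
      Submodule.span R {z⁻¹} * (Submodule.span R {z} * ((1 : Submodule R K) / J)) := by
    rw [← mul_assoc, Submodule.span_mul_span, Set.singleton_mul_singleton,
      inv_mul_cancel₀ h0, ← Submodule.one_eq_span, one_mul]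
  rw [key]
  exact Submodule.FG.mul (Submodule.fg_span_singleton _) (aux_fg_of_le aux_one_fg hle)

lemma aux_unit_sum [IsLocalRing R] (hinj : Function.Injective (algebraMap R K))
    {ι : Type*} (s : Finset ι) (g : ι → K) :
    (∀ i ∈ s, g i ∈ (1 : Submodule R K)) → ∀ r : R, IsUnit r →
      ∑ i ∈ s, g i = algebraMap R K r →
      ∃ i ∈ s, ∃ u : R, IsUnit u ∧ algebraMap R K u = g i := by
  classical
  induction s using Finset.induction_on with
  | empty =>
    intro _ r hr hsum
    exfalso
    rw [Finset.sum_empty] at hsum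
    exact (hr.map (algebraMap R K)).ne_zero hsum.symm
  | @insert a s ha ih =>
    intro hg r hr hsum
    rw [Finset.sum_insert ha] at hsum
    obtain ⟨p, hp⟩ := Submodule.mem_one.mp (hg a (Finset.mem_insert_self a s))
    have hrest : ∑ i ∈ s, g i ∈ (1 : Submodule R K) :=
      Submodule.sum_mem _ fun i hi => hg i (Finset.mem_insert_of_mem hi)
    obtain ⟨q, hq⟩ := Submodule.mem_one.mp hrest
    have hpq : p + q = r := by
      apply hinj
      rw [map_add, hp, hq, hsum]
    have hur : IsUnit (p + q) := by rw [hpq]; exact hr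
    rcases IsLocalRing.isUnit_or_isUnit_of_isUnit_add hur with hP | hQ
    · exact ⟨a, Finset.mem_insert_self a s, p, hP, hp⟩
    · obtain ⟨i, hi, u, hu1, hu2⟩ :=
        ih (fun i hi => hg i (Finset.mem_insert_of_mem hi)) q hQ hq.symm
      exact ⟨i, Finset.mem_insert_of_mem hi, u, hu1, hu2⟩

lemma aux_principal [IsLocalRing R] (hinj : Function.Injective (algebraMap R K))
    (I' : Submodule R K)
    (hT : (1 : Submodule R K) ≤ I' * ((1 : Submodule R K) / I')) :
    ∃ a : K, I' = Submodule.span R {a} := by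
  classical
  have h1mem : (1 : K) ∈ I' * ((1 : Submodule R K) / I') := hT (Submodule.one_le.mp le_rfl)
  obtain ⟨T, T', hTs, hT's, hsp⟩ := Submodule.mem_span_mul_finite_of_mem_mul h1mem
  obtain ⟨c, hsupp, hsum⟩ := mem_span_set.mp hsp
  have hg : ∀ i ∈ c.support, c i • i ∈ (1 : Submodule R K) := by
    intro i hi
    obtain ⟨s, hs, t, ht, rfl⟩ := Set.mem_mul.mp (hsupp hi)
    refine Submodule.smul_mem _ _ ?_
    rw [mul_comm]
    exact Submodule.mem_div_iff_forall_mul_mem.mp (hT's ht) s (hTs hs)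
  have hsum' : ∑ i ∈ c.support, c i • i = algebraMap R K 1 := by
    rw [map_one]
    rw [Finsupp.sum] at hsum
    exact hsum
  obtain ⟨i, hi, u, hu, hualg⟩ :=
    aux_unit_sum hinj c.support (fun i => c i • i) hg 1 isUnit_one hsum'
  obtain ⟨s, hs, t, ht, hst⟩ := Set.mem_mul.mp (hsupp hi)
  have haI : c i • s ∈ I' := Submodule.smul_mem _ _ (hTs hs)
  have hat : (c i • s) * t = algebraMap R K u := by
    rw [smul_mul_assoc, hst, hualg]
  obtain ⟨v, hv⟩ := hu.exists_right_inv
  refine ⟨c i • s, le_antisymm ?_ (Submodule.span_le.mpr (Set.singleton_subset_iff.mpr haI))⟩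
  intro z hz
  obtain ⟨w, hw⟩ := Submodule.mem_one.mp (Submodule.mem_div_iff_forall_mul_mem.mp (hT's ht) z hz)
  rw [Submodule.mem_span_singleton]
  refine ⟨w * v, ?_⟩
  have huv : algebraMap R K u * algebraMap R K v = 1 := by rw [← map_mul, hv, map_one]
  calc (w * v) • (c i • s)
      = algebraMap R K w * algebraMap R K v * (c i • s) := by rw [Algebra.smul_def, map_mul]
    _ = t * z * (algebraMap R K v * (c i • s)) := by rw [hw]; ring
    _ = z * ((c i • s) * t * algebraMap R K v) := by ring
    _ = z := by rw [hat, huv, mul_one]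

end Aux

theorem stmt_17
    (R : Type*) [CommRing R] [IsDomain R] [IsLocalRing R] [IsNoetherianRing R]
    (K : Type*) [Field K] [Algebra R K] [IsFractionRing R K]
    [IsDiscreteValuationRing (integralClosure R K)]
    [Module.Finite R (integralClosure R K)]
    (hres : ∀ y : integralClosure R K, ∃ a : R,
      y - algebraMap R (integralClosure R K) a ∈ maximalIdeal (integralClosure R K))
    (hkinf : Infinite (ResidueField R))
    (I : Ideal R) (hI0 : I ≠ ⊥) (hIrad : I.radical = maximalIdeal R)
    (hInp : ¬ I.IsPrincipal)
    (x : R) (hxI : x ∈ I)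
    (ν : ℕ) (hν : IsLeast {n : ℕ | ∀ k ≥ n, I ^ (k + 1) = Ideal.span {x} * I ^ k} ν)
    (ω : Submodule R K) (hω1 : 1 ≤ ω) (hω2 : ω < ((integralClosure R K).toSubmodule))
    (hωω : ω / ω = 1)
    (hωdual : ∀ J : Submodule R K, J ≠ ⊥ → J.FG → ω / (ω / J) = J)
    (hAG : idl R K (maximalIdeal R) * ω = idl R K (maximalIdeal R))
    (hIrefl : (idl R K I) = (1 : Submodule R K) / ((1 : Submodule R K) / (idl R K I))) :
    ω ≤ (blowup R K I) ∧ (blowup R K I) = (1 : Submodule R K) / ((1 : Submodule R K) / (blowup R K I)) ∧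
      ∀ m ≥ ν, (idl R K I) ^ m = (1 : Submodule R K) / ((1 : Submodule R K) / ((idl R K I) ^ m)) := by
  classical
  have hinj : Function.Injective (algebraMap R K) := IsFractionRing.injective R K
  set I' : Submodule R K := idl R K I with hI'def
  have hflin : (Algebra.ofId R K).toLinearMap = Algebra.linearMap R K := rfl
  have hidl_pow : ∀ n : ℕ, idl R K (I ^ n) = I' ^ n := by
    intro n
    show Submodule.map (Algebra.linearMap R K) (I ^ n)
      = (Submodule.map (Algebra.linearMap R K) I) ^ n
    rw [← hflin]
    exact Submodule.map_pow I (Algebra.ofId R K) n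
  have hidl_mul : ∀ (A B : Ideal R), idl R K (A * B) = idl R K A * idl R K B := by
    intro A B
    show Submodule.map (Algebra.linearMap R K) (A * B) = _
    rw [← hflin]
    exact Submodule.map_mul A B (Algebra.ofId R K)
  have hidl_span : ∀ y : R, idl R K (Ideal.span {y}) = Submodule.span R {algebraMap R K y} := by
    intro y
    show Submodule.map (Algebra.linearMap R K) (Ideal.span {y}) = _
    rw [Ideal.span, Submodule.map_span, Set.image_singleton]
    rfl
  have hidl_le_one : ∀ (A : Ideal R), idl R K A ≤ 1 := by
    intro A z hz
    obtain ⟨r, _, rfl⟩ := Submodule.mem_map.mp hz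
    exact Submodule.mem_one.mpr ⟨r, rfl⟩
  obtain ⟨y, hyI, hy0⟩ := (Submodule.ne_bot_iff I).mp hI0
  have hxne : x ≠ 0 := by
    rintro rfl
    have h := hν.1 ν le_rfl
    rw [Ideal.span_singleton_eq_bot.mpr rfl, bot_mul] at h
    have hyb : y ^ (ν + 1) = 0 := by
      have hmem := Ideal.pow_mem_pow hyI (ν + 1)
      rw [h] at hmem
      exact (Submodule.mem_bot R).mp hmem
    exact hy0 (pow_eq_zero_iff (Nat.succ_ne_zero ν) |>.mp hyb)
  have haxne : algebraMap R K x ≠ 0 := fun h => hxne (hinj (h.trans (map_zero _).symm))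
  have hν0 : ν ≠ 0 := by
    rintro rfl
    refine hInp ⟨⟨x, ?_⟩⟩
    have h := hν.1 0 le_rfl
    rwa [zero_add, pow_one, pow_zero, mul_one] at h
  -- the trace ideal is contained in the maximal ideal
  have hT1 : I' * ((1 : Submodule R K) / I') ≤ 1 := by
    refine Submodule.mul_le.mpr fun m hm n hn => ?_
    rw [mul_comm]
    exact Submodule.mem_div_iff_forall_mul_mem.mp hn m hm
  have hTm : I' * ((1 : Submodule R K) / I') ≤ idl R K (maximalIdeal R) := by
    intro z hz
    obtain ⟨r, hr⟩ := Submodule.mem_one.mp (hT1 hz)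
    by_cases hrm : r ∈ maximalIdeal R
    · exact Submodule.mem_map.mpr ⟨r, hrm, hr⟩
    · exfalso
      have hu : IsUnit r := IsLocalRing.notMem_maximalIdeal.mp hrm
      obtain ⟨v, hv⟩ := hu.exists_right_inv
      have hTall : (1 : Submodule R K) ≤ I' * ((1 : Submodule R K) / I') := by
        intro w hw
        obtain ⟨b, hb⟩ := Submodule.mem_one.mp hw
        have hwz : w = (b * v) • z := by
          rw [Algebra.smul_def, ← hr, ← map_mul]
          rw [show b * v * r = b * (r * v) by ring, hv, mul_one, hb]
        rw [hwz]
        exact Submodule.smul_mem _ _ hz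
      obtain ⟨a, hspan⟩ := aux_principal hinj I' hTall
      apply hInp
      have haI' : a ∈ I' := hspan ▸ Submodule.mem_span_singleton_self a
      obtain ⟨a₀, ha₀I, ha₀⟩ := Submodule.mem_map.mp haI'
      refine ⟨⟨a₀, le_antisymm ?_ ?_⟩⟩
      · intro w hwI
        have hmem : algebraMap R K w ∈ I' := Submodule.mem_map.mpr ⟨w, hwI, rfl⟩
        rw [hspan, Submodule.mem_span_singleton] at hmem
        obtain ⟨r', hr'⟩ := hmem
        refine Submodule.mem_span_singleton.mpr ⟨r', hinj ?_⟩
        show algebraMap R K (r' • a₀) = algebraMap R K w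
        rw [smul_eq_mul, map_mul, ← Algebra.smul_def]
        have ha₀' : algebraMap R K a₀ = a := ha₀
        rw [ha₀', hr']
      · exact Submodule.span_le.mpr (Set.singleton_subset_iff.mpr ha₀I)
  -- ω multiplies I' into itself
  have hωI : ω * I' ≤ I' := by
    refine Submodule.mul_le.mpr fun w hw i hi => ?_
    rw [hIrefl, Submodule.mem_div_iff_forall_mul_mem]
    intro j hj
    have h1 : i * j ∈ idl R K (maximalIdeal R) := hTm (Submodule.mul_mem_mul hi hj)
    have h2 : i * j * w ∈ idl R K (maximalIdeal R) := by
      rw [← hAG]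
      exact Submodule.mul_mem_mul h1 hw
    have h3 := hidl_le_one (maximalIdeal R) h2
    have heq : w * i * j = i * j * w := by ring
    rwa [heq]
  have hωpow : ∀ n : ℕ, ω * I' ^ (n + 1) ≤ I' ^ (n + 1) := by
    intro n
    induction n with
    | zero => rw [pow_one]; exact hωI
    | succ n ih =>
      calc ω * I' ^ (n + 2) = ω * I' ^ (n + 1) * I' := by rw [pow_succ, ← mul_assoc]
        _ ≤ I' ^ (n + 1) * I' := mul_le_mul' ih le_rfl
        _ = I' ^ (n + 2) := (pow_succ I' (n + 1)).symm
  have hωel : ∀ m : ℕ, m ≠ 0 → ∀ w ∈ ω, ∀ t ∈ I' ^ m, w * t ∈ I' ^ m := by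
    intro m hm w hw t ht
    obtain ⟨n, rfl⟩ := Nat.exists_eq_succ_of_ne_zero hm
    exact hωpow n (Submodule.mul_mem_mul hw ht)
  -- blow-up stabilization
  have hstep : ∀ k, ν ≤ k → I' ^ (k + 1) = Submodule.span R {algebraMap R K x} * I' ^ k := by
    intro k hk
    have h := congrArg (idl R K) (hν.1 k hk)
    rwa [hidl_pow, hidl_mul, hidl_span, hidl_pow] at h
  have hdivstep : ∀ (c : K), c ≠ 0 → ∀ M : Submodule R K,
      (Submodule.span R {c} * M) / (Submodule.span R {c} * M) = M / M := by
    intro c hc M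
    ext z
    simp only [Submodule.mem_div_iff_forall_mul_mem]
    constructor
    · intro h m hm
      have hcm : c * m ∈ Submodule.span R {c} * M :=
        Submodule.mul_mem_mul (Submodule.mem_span_singleton_self c) hm
      have h2 := h _ hcm
      rw [Submodule.mem_span_singleton_mul] at h2
      obtain ⟨m', hm', hcm'⟩ := h2
      have hzm : z * m = m' := by
        apply mul_left_cancel₀ hc
        rw [hcm']
        ring
      rw [hzm]
      exact hm'
    · intro h m hm
      obtain ⟨m', hm', rfl⟩ := Submodule.mem_span_singleton_mul.mp hm
      refine Submodule.mem_span_singleton_mul.mpr ⟨z * m', h _ hm', ?_⟩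
      ring
  have hstab : ∀ k, I' ^ (ν + k) / I' ^ (ν + k) = I' ^ ν / I' ^ ν := by
    intro k
    induction k with
    | zero => rfl
    | succ k ih =>
      have h := hstep (ν + k) (Nat.le_add_right ν k)
      show I' ^ ((ν + k) + 1) / I' ^ ((ν + k) + 1) = I' ^ ν / I' ^ ν
      rw [h, hdivstep _ haxne]
      exact ih
  have hmono : ∀ M N : Submodule R K, M / M ≤ (M * N) / (M * N) := by
    intro M N z hz
    rw [Submodule.mem_div_iff_forall_mul_mem] at hz ⊢
    intro t ht
    refine Submodule.mul_induction_on (C := fun t => z * t ∈ M * N) ht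
      (fun m hm n hn => ?_) (fun a b ha hb => ?_)
    · show z * (m * n) ∈ M * N
      rw [← mul_assoc]
      exact Submodule.mul_mem_mul (hz m hm) hn
    · show z * (a + b) ∈ M * N
      rw [mul_add]
      exact add_mem ha hb
  have hall : ∀ n : ℕ, I' ^ n / I' ^ n ≤ I' ^ ν / I' ^ ν := by
    intro n
    rcases le_or_gt n ν with h | h
    · obtain ⟨k, hk⟩ := Nat.exists_eq_add_of_le h
      rw [hk, pow_add]
      exact hmono (I' ^ n) (I' ^ k)
    · obtain ⟨k, hk⟩ := Nat.exists_eq_add_of_le h.le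
      rw [hk]
      exact (hstab k).le
  have hblow : blowup R K I = I' ^ ν / I' ^ ν := by
    apply le_antisymm
    · exact iSup_le hall
    · exact le_iSup (fun n : ℕ => idl R K I ^ n / idl R K I ^ n) ν
  have hων : ω ≤ I' ^ ν / I' ^ ν := by
    intro w hw
    rw [Submodule.mem_div_iff_forall_mul_mem]
    intro t ht
    exact hωel ν hν0 w hw t ht
  -- reflexivity ingredients
  have hyK : algebraMap R K y ∈ I' := Submodule.mem_map_of_mem hyI
  have hz₀ : (algebraMap R K y) ^ ν ∈ I' ^ ν := Submodule.pow_mem_pow _ hyK ν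
  have hz₀0 : (algebraMap R K y) ^ ν ≠ 0 :=
    pow_ne_zero ν (fun h => hy0 (hinj (h.trans (map_zero _).symm)))
  have hpow_le_one : ∀ n : ℕ, I' ^ n ≤ 1 := by
    intro n
    induction n with
    | zero => rw [pow_zero]
    | succ n ih =>
      calc I' ^ (n + 1) = I' ^ n * I' := pow_succ I' n
        _ ≤ 1 * 1 := mul_le_mul' ih (hidl_le_one I)
        _ = 1 := one_mul 1
  have hΛω : ω * (I' ^ ν / I' ^ ν) = I' ^ ν / I' ^ ν := by
    apply le_antisymm
    · refine Submodule.mul_le.mpr fun w hw z hz => ?_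
      rw [Submodule.mem_div_iff_forall_mul_mem]
      intro t ht
      have hzt : z * t ∈ I' ^ ν := Submodule.mem_div_iff_forall_mul_mem.mp hz t ht
      have h2 := hωel ν hν0 w hw _ hzt
      rwa [mul_assoc]
    · conv_lhs => rw [← one_mul (I' ^ ν / I' ^ ν)]
      exact mul_le_mul' hω1 le_rfl
  have hΛle : I' ^ ν / I' ^ ν ≤ (1 : Submodule R K) / (I' ^ ν) := by
    intro z hz
    rw [Submodule.mem_div_iff_forall_mul_mem]
    intro t ht
    exact hpow_le_one ν (Submodule.mem_div_iff_forall_mul_mem.mp hz t ht)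
  have hΛfg : (I' ^ ν / I' ^ ν).FG := aux_fg_of_le (aux_div_fg hz₀ hz₀0) hΛle
  have hΛbot : I' ^ ν / I' ^ ν ≠ ⊥ := by
    refine (Submodule.ne_bot_iff _).mpr ⟨1, ?_, one_ne_zero⟩
    rw [Submodule.mem_div_iff_forall_mul_mem]
    intro t ht
    rwa [one_mul]
  have hΛrefl : I' ^ ν / I' ^ ν = 1 / (1 / (I' ^ ν / I' ^ ν)) :=
    aux_refl ω _ hω1 hωω (hωdual _ hΛbot hΛfg) hΛω
  have hIfg : I'.FG := (IsNoetherian.noetherian I).map _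
  refine ⟨?_, ?_, ?_⟩
  · rw [hblow]; exact hων
  · rw [hblow]; exact hΛrefl
  · intro m hm
    have hm0 : m ≠ 0 := fun h => hν0 (Nat.le_zero.mp (h ▸ hm))
    have hmul : ω * I' ^ m = I' ^ m := by
      apply le_antisymm
      · obtain ⟨n, rfl⟩ := Nat.exists_eq_succ_of_ne_zero hm0
        exact hωpow n
      · conv_lhs => rw [← one_mul (I' ^ m)]
        exact mul_le_mul' hω1 le_rfl
    have hfg : (I' ^ m).FG := hIfg.pow m
    have hbot : I' ^ m ≠ ⊥ := by
      refine (Submodule.ne_bot_iff _).mpr ⟨(algebraMap R K y) ^ m, ?_, ?_⟩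
      · exact Submodule.pow_mem_pow _ hyK m
      · exact pow_ne_zero m (fun h => hy0 (hinj (h.trans (map_zero _).symm)))
    exact aux_refl ω (I' ^ m) hω1 hωω (hωdual _ hbot hfg) hmul
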